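/- Let F be a field and N ≥ 1. Let I be the bipartite graph whose vertex classes are the four 3-element subsets of {1,2,3,4} and the four elements of {1,2,3,4}, with an edge between a subset S and an element v if and only if v ∈ S (so I is K_{4,4} minus a perfect matching). Then the (3,4)-hyperclique tensor H^N_{3,4} = Σ_{i,j,k,ℓ=1}^N x_{ijk}·y_{ijℓ}·z_{ikℓ}·w_{jkℓ} is a simple projection of the graph tensor T_{I,N}: H^N_{3,4} ≤_s T_{I,N}. -/

import Mathlib

open Classical Finset MvPolynomial

/-- A multigraph on the ambient vertex type `V`: a finite edge type together with an
assignment of an unordered pair of distinct end-vertices to every edge.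
Parallel edges are allowed. -/
structure Multigraph (V : Type) where
  E : Type
  [decE : DecidableEq E]
  [fintE : Fintype E]
  ends : E → Sym2 V
  loopless : ∀ e, ¬ (ends e).IsDiag

attribute [instance] Multigraph.decE Multigraph.fintE

namespace Multigraph

/-- The set (type) of edges incident with the vertex `v`. -/
def Inc {V : Type} (G : Multigraph V) (v : V) : Type := {e : G.E // v ∈ G.ends e}

noncomputable instance {V : Type} (G : Multigraph V) (v : V) : Fintype (G.Inc v) :=
  Fintype.ofInjective (fun e : G.Inc v => e.1) Subtype.val_injective

noncomputable instance {V : Type} (G : Multigraph V) (v : V) : DecidableEq (G.Inc v) :=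
  Classical.decEq _

end Multigraph

/-- The graph tensor `T_{G,n}`, represented by its array of coefficients:
it is the set-multilinear polynomial with one mode per vertex `v`, whose mode-`v`
variables are indexed by the functions `g : I_G(v) → Fin n`, and which equals
`∑_{f : E(G) → Fin n} ∏_{v} x^{(v)}_{f | I_G(v)}`.  Hence the coefficient of the
set-multilinear monomial `∏_v x^{(v)}_{a v}` is the number of `f : E(G) → Fin n`
whose restriction to `I_G(v)` equals `a v` for every `v`. -/
noncomputable def gTensor (F : Type) [Field F] {V : Type} (G : Multigraph V) (n : ℕ) :
    (∀ v : V, G.Inc v → Fin n) → F :=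
  fun a => ∑ f : G.E → Fin n,
    if ∀ (v : V) (e : G.Inc v), a v e = f e.1 then 1 else 0

/-- Two tensors (given by their coefficient arrays, with modes indexed by `ι` resp. `κ`
and with mode variable sets `X i` resp. `Y j`) are equivalent if one is obtained from the
other by a bijective renaming of variables that is bijective on modes. -/
def TEquiv {F : Type} [Field F] {ι κ : Type} {X : ι → Type} {Y : κ → Type}
    (S : (∀ i, X i) → F) (T : (∀ j, Y j) → F) : Prop :=
  ∃ (σ : ι ≃ κ) (e : ∀ i, X i ≃ Y (σ i)),
    ∀ b : ∀ j, Y j, T b = S fun i => (e i).symm (b (σ i))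

/-- The Kronecker product of two tensors with the same mode index type `ι`:
the `i`-th mode of `S ⊗ T` has variable set `X i × Y i`, and the coefficients multiply. -/
def kron {F : Type} [Field F] {ι : Type} {X Y : ι → Type}
    (S : (∀ i, X i) → F) (T : (∀ i, Y i) → F) : (∀ i, X i × Y i) → F :=
  fun c => S (fun i => (c i).1) * T (fun i => (c i).2)

/-- The `k`-th Kronecker power of a `d`-mode tensor with `n` variables per mode. -/
def kronPow {F : Type} [Field F] {d n : ℕ} (T : (Fin d → Fin n) → F) (k : ℕ) :
    (Fin d → (Fin k → Fin n)) → F :=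
  fun a => ∏ s : Fin k, T fun i => a i s

/-- The rank of a tensor: the least `r` such that `T` is the sum of `r` products of
linear forms, one linear form per mode (a linear form on mode `i` is recorded by its
coefficient vector `X i → F`). -/
noncomputable def tensorRank {F : Type} [Field F] {ι : Type} [Fintype ι] {X : ι → Type}
    (T : (∀ i, X i) → F) : ℕ :=
  sInf {r : ℕ | ∃ ℓ : Fin r → (∀ i, X i → F),
    ∀ a : ∀ i, X i, T a = ∑ s : Fin r, ∏ i, ℓ s i (a i)}

/-- `S` is a restriction of `T` (written `S ≤ T`): there is a bijection `σ` between the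
modes of `T` and the modes of `S` such that `S` is obtained from `T` by substituting for
each variable of mode `j` of `T` a linear form (recorded by its coefficient vector `M j y`)
in the variables of mode `σ j` of `S`. -/
def Restrict {F : Type} [Field F] {ι κ : Type} [Fintype κ] [DecidableEq κ]
    {X : ι → Type} {Y : κ → Type} [∀ j, Fintype (Y j)]
    (S : (∀ i, X i) → F) (T : (∀ j, Y j) → F) : Prop :=
  ∃ (σ : κ ≃ ι) (M : ∀ j, Y j → X (σ j) → F),
    ∀ a : ∀ i, X i, S a = ∑ b : ∀ j, Y j, T b * ∏ j, M j (b j) (a (σ j))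

/-- The tensor, viewed as an honest (set-multilinear) polynomial in the variables
`Σ i, X i`. -/
noncomputable def toPoly {F : Type} [Field F] {ι : Type} [Fintype ι] [DecidableEq ι]
    {X : ι → Type} [∀ i, Fintype (X i)] (T : (∀ i, X i) → F) :
    MvPolynomial (Σ i, X i) F :=
  ∑ a : ∀ i, X i, MvPolynomial.C (T a) * ∏ i, MvPolynomial.X (⟨i, a i⟩ : Σ i, X i)

/-- `S` is a simple projection of `T` (written `S ≤ₛ T`): `S` is obtained from `T` by a
substitution assigning to each variable of `T` either a scalar or a variable of `S`, in
such a way that the image of the variable set of each mode of `T` meets the variable set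
of at most one mode of `S`. -/
def SimpleProj {F : Type} [Field F] {ι κ : Type} [Fintype ι] [DecidableEq ι]
    [Fintype κ] [DecidableEq κ] {X : ι → Type} {Y : κ → Type}
    [∀ i, Fintype (X i)] [∀ j, Fintype (Y j)]
    (S : (∀ i, X i) → F) (T : (∀ j, Y j) → F) : Prop :=
  ∃ s : (Σ j, Y j) → F ⊕ (Σ i, X i),
    (∀ (j : κ) (y y' : Y j) (p p' : Σ i, X i),
        s ⟨j, y⟩ = Sum.inr p → s ⟨j, y'⟩ = Sum.inr p' → p.1 = p'.1) ∧
    toPoly S = MvPolynomial.aeval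
      (fun q => Sum.elim (fun c => (MvPolynomial.C c : MvPolynomial (Σ i, X i) F))
        (fun p => MvPolynomial.X p) (s q)) (toPoly T)

/-- The bipartite incidence graph `I = I_{3,4}` of the `(3,4)`-hyperclique: one vertex
class consists of the four 3-element subsets of `{1,2,3,4}`, the other of the four
elements of `{1,2,3,4}`, with an edge between a subset `S` and an element `v` iff
`v ∈ S` (this is `K_{4,4}` minus a perfect matching). -/
def hcIncidence : Multigraph ({S : Finset (Fin 4) // S.card = 3} ⊕ Fin 4) where
  E := {p : {S : Finset (Fin 4) // S.card = 3} × Fin 4 // p.2 ∈ p.1.1}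
  ends := fun p => s(Sum.inl p.1.1, Sum.inr p.1.2)
  loopless := fun p h => by simpa using Sym2.mk_isDiag_iff.mp h

/-- The `(3,4)`-hyperclique tensor
`H^N_{3,4} = Σ_{i,j,k,ℓ=1}^N x_{ijk}·y_{ijℓ}·z_{ikℓ}·w_{jkℓ}`, given by its coefficient
array: the four modes are indexed by `Fin 4`, each with variable set `Fin N × Fin N × Fin N`
(`a 0` plays the role of the index of the `x`-variable, etc.). -/
noncomputable def hcTensor (F : Type) [Field F] (N : ℕ) :
    (Fin 4 → Fin N × Fin N × Fin N) → F :=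
  fun a => ∑ i : Fin N, ∑ j : Fin N, ∑ k : Fin N, ∑ l : Fin N,
    if a 0 = (i, j, k) ∧ a 1 = (i, j, l) ∧ a 2 = (i, k, l) ∧ a 3 = (j, k, l)
    then 1 else 0

namespace HC34

abbrev Vtx := ({S : Finset (Fin 4) // S.card = 3} ⊕ Fin 4)

/-- The four 3-element subsets, indexed by modes. -/
def mset : Fin 4 → Finset (Fin 4) := ![{0,1,2}, {0,1,3}, {0,2,3}, {1,2,3}]

/-- The variable index triple at mode `m` extracted from a value assignment `c`. -/
def tripAt {N : ℕ} (m : Fin 4) (c : Fin 4 → Fin N) : Fin N × Fin N × Fin N :=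
  ![(c 0, c 1, c 2), (c 0, c 1, c 3), (c 0, c 2, c 3), (c 1, c 2, c 3)] m

def modeOf' (S : Finset (Fin 4)) : Fin 4 :=
  if (3:Fin 4) ∉ S then 0 else if (2:Fin 4) ∉ S then 1 else if (1:Fin 4) ∉ S then 2 else 3

lemma mset_modeOf' : ∀ S : Finset (Fin 4), S.card = 3 → S = mset (modeOf' S) := by decide

def modeOf (S : {S : Finset (Fin 4) // S.card = 3}) : Fin 4 := modeOf' S.1

lemma mset_modeOf (S : {S : Finset (Fin 4) // S.card = 3}) : S.1 = mset (modeOf S) :=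
  mset_modeOf' S.1 S.2

lemma modeOf_bijective : Function.Bijective modeOf := by
  rw [Fintype.bijective_iff_injective_and_card]
  constructor
  · intro S S' h
    apply Subtype.ext
    rw [mset_modeOf S, mset_modeOf S', h]
  · decide

lemma tripAt_congr {N : ℕ} (m : Fin 4) {c c' : Fin 4 → Fin N}
    (h : ∀ v ∈ mset m, c v = c' v) : tripAt m c = tripAt m c' := by
  fin_cases m
  · show (c 0, c 1, c 2) = (c' 0, c' 1, c' 2)
    rw [h 0 (by decide), h 1 (by decide), h 2 (by decide)]
  · show (c 0, c 1, c 3) = (c' 0, c' 1, c' 3)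
    rw [h 0 (by decide), h 1 (by decide), h 3 (by decide)]
  · show (c 0, c 2, c 3) = (c' 0, c' 2, c' 3)
    rw [h 0 (by decide), h 2 (by decide), h 3 (by decide)]
  · show (c 1, c 2, c 3) = (c' 1, c' 2, c' 3)
    rw [h 1 (by decide), h 2 (by decide), h 3 (by decide)]

lemma mem_ends_left (e : hcIncidence.E) : Sum.inl e.1.1 ∈ hcIncidence.ends e := by
  simp [hcIncidence]

lemma mem_ends_right (e : hcIncidence.E) : Sum.inr e.1.2 ∈ hcIncidence.ends e := by
  simp [hcIncidence]

lemma inc_left_fst {S : {S : Finset (Fin 4) // S.card = 3}}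
    (e : hcIncidence.Inc (Sum.inl S)) : e.1.1.1 = S := by
  have := e.2
  simp [hcIncidence, Sym2.mem_iff] at this
  exact this.symm

lemma inc_right_snd {v : Fin 4} (e : hcIncidence.Inc (Sum.inr v)) : e.1.1.2 = v := by
  have := e.2
  simp [hcIncidence, Sym2.mem_iff] at this
  exact this.symm

/-- The canonical edge-labelling determined by a mode-variable assignment. -/
def fCan {N : ℕ} (a : ∀ v : Vtx, hcIncidence.Inc v → Fin N) : hcIncidence.E → Fin N :=
  fun e => a (Sum.inl e.1.1) ⟨e, mem_ends_left e⟩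

def Cons {N : ℕ} (a : ∀ v : Vtx, hcIncidence.Inc v → Fin N) : Prop :=
  ∀ (v : Vtx) (e : hcIncidence.Inc v), a v e = fCan a e.1

lemma gTensor_eq (F : Type) [Field F] {N : ℕ} (a : ∀ v : Vtx, hcIncidence.Inc v → Fin N) :
    gTensor F hcIncidence N a = if Cons a then 1 else 0 := by
  unfold gTensor
  rw [Finset.sum_eq_single (fCan a)]
  · by_cases hc : Cons a
    · rw [if_pos hc]; exact if_pos hc
    · rw [if_neg hc]; exact if_neg hc
  · intro f _ hf
    rw [if_neg]
    intro h
    exact hf (funext fun e => (h (Sum.inl e.1.1) ⟨e, mem_ends_left e⟩).symm)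
  · intro h; exact absurd (Finset.mem_univ _) h

/-- The assignment determined by a value tuple `c`. -/
def B {N : ℕ} (c : Fin 4 → Fin N) : ∀ v : Vtx, hcIncidence.Inc v → Fin N :=
  fun _ e => c e.1.1.2

lemma cons_B {N : ℕ} (c : Fin 4 → Fin N) : Cons (B c) := fun _ _ => rfl

lemma Sv_aux : ∀ v : Fin 4, (Finset.univ.erase (v+1)).card = 3 ∧ v ∈ Finset.univ.erase (v+1) := by
  decide

def Sv (v : Fin 4) : {S : Finset (Fin 4) // S.card = 3} := ⟨Finset.univ.erase (v+1), (Sv_aux v).1⟩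

def edge0 (v : Fin 4) : hcIncidence.Inc (Sum.inr v) :=
  ⟨⟨(Sv v, v), (Sv_aux v).2⟩, mem_ends_right _⟩

lemma B_injective {N : ℕ} : Function.Injective (B (N := N)) := by
  intro c c' h
  funext v
  exact congrFun (congrFun h (Sum.inr v)) (edge0 v)

def Good {N : ℕ} (b : ∀ v : Vtx, hcIncidence.Inc v → Fin N) : Prop :=
  Cons b ∧ ∀ v : Fin 4, ∃ cv : Fin N, ∀ e : hcIncidence.Inc (Sum.inr v), b (Sum.inr v) e = cv

lemma good_B {N : ℕ} (c : Fin 4 → Fin N) : Good (B c) := by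
  refine ⟨cons_B c, fun v => ⟨c v, fun e => ?_⟩⟩
  show c e.1.1.2 = c v
  rw [inc_right_snd e]

lemma good_exists {N : ℕ} {b : ∀ v : Vtx, hcIncidence.Inc v → Fin N} (hb : Good b) :
    ∃ c : Fin 4 → Fin N, B c = b := by
  obtain ⟨hc, hconst⟩ := hb
  choose cv hcv using hconst
  refine ⟨cv, ?_⟩
  have key : ∀ e : hcIncidence.E, fCan b e = cv e.1.2 := by
    intro e
    rw [← hcv e.1.2 ⟨e, mem_ends_right e⟩]
    exact (hc (Sum.inr e.1.2) ⟨e, mem_ends_right e⟩).symm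
  funext v e
  show cv e.1.1.2 = b v e
  rw [hc v e, key e.1]

/-- Read off the values of `g` on the elements of `S`. -/
def gAtL {N : ℕ} [NeZero N] (S : {S : Finset (Fin 4) // S.card = 3})
    (g : hcIncidence.Inc (Sum.inl S) → Fin N) (v : Fin 4) : Fin N :=
  if h : v ∈ S.1 then g ⟨⟨(S, v), h⟩, mem_ends_left ⟨(S, v), h⟩⟩ else 0

lemma tripAt_gAtL_B {N : ℕ} [NeZero N] (S : {S : Finset (Fin 4) // S.card = 3})
    (c : Fin 4 → Fin N) :
    tripAt (modeOf S) (gAtL S (B c (Sum.inl S))) = tripAt (modeOf S) c := by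
  apply tripAt_congr
  intro v hv
  rw [← mset_modeOf S] at hv
  simp only [gAtL, dif_pos hv]
  rfl

noncomputable def theSub (F : Type) [Field F] (N : ℕ) [NeZero N] :
    (Σ v : Vtx, hcIncidence.Inc v → Fin N) → F ⊕ (Σ i : Fin 4, Fin N × Fin N × Fin N) :=
  fun q => match q with
  | ⟨Sum.inl S, g⟩ => Sum.inr ⟨modeOf S, tripAt (modeOf S) (gAtL S g)⟩
  | ⟨Sum.inr _, g⟩ => Sum.inl (if ∃ cv : Fin N, ∀ e, g e = cv then 1 else 0)

end HC34
namespace HC34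

lemma theSub_inl (F : Type) [Field F] (N : ℕ) [NeZero N]
    (S : {S : Finset (Fin 4) // S.card = 3}) (g : hcIncidence.Inc (Sum.inl S) → Fin N) :
    theSub F N ⟨Sum.inl S, g⟩ = Sum.inr ⟨modeOf S, tripAt (modeOf S) (gAtL S g)⟩ := rfl

lemma theSub_inr (F : Type) [Field F] (N : ℕ) [NeZero N]
    (v : Fin 4) (g : hcIncidence.Inc (Sum.inr v) → Fin N) :
    theSub F N ⟨Sum.inr v, g⟩ = Sum.inl (if ∃ cv : Fin N, ∀ e, g e = cv then 1 else 0) := rfl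

/-- The assignment of hyperclique mode variables determined by a value tuple. -/
def A {N : ℕ} (c : Fin 4 → Fin N) : Fin 4 → Fin N × Fin N × Fin N := fun m => tripAt m c

lemma A_injective {N : ℕ} : Function.Injective (A (N := N)) := by
  intro c c' h
  have h0 : (c 0, c 1, c 2) = (c' 0, c' 1, c' 2) := congrFun h 0
  have h3 : (c 1, c 2, c 3) = (c' 1, c' 2, c' 3) := congrFun h 3
  rw [Prod.mk.injEq, Prod.mk.injEq] at h0 h3
  funext v
  fin_cases v
  · exact h0.1
  · exact h0.2.1
  · exact h0.2.2
  · exact h3.2.2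

lemma hcTensor_eq (F : Type) [Field F] {N : ℕ} (a : Fin 4 → Fin N × Fin N × Fin N) :
    hcTensor F N a = if ∃ c : Fin 4 → Fin N, a = A c then 1 else 0 := by
  unfold hcTensor
  by_cases h : ∃ c : Fin 4 → Fin N, a = A c
  · obtain ⟨c, rfl⟩ := h
    rw [if_pos ⟨c, rfl⟩]
    have hcond : ∀ i j k l : Fin N,
        (A c 0 = (i,j,k) ∧ A c 1 = (i,j,l) ∧ A c 2 = (i,k,l) ∧ A c 3 = (j,k,l))
          ↔ (i = c 0 ∧ (j = c 1 ∧ (k = c 2 ∧ l = c 3))) := by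
      intro i j k l
      constructor
      · rintro ⟨h0, -, -, h3⟩
        rw [show A c 0 = (c 0, c 1, c 2) from rfl, Prod.mk.injEq, Prod.mk.injEq] at h0
        rw [show A c 3 = (c 1, c 2, c 3) from rfl, Prod.mk.injEq, Prod.mk.injEq] at h3
        exact ⟨h0.1.symm, h0.2.1.symm, h0.2.2.symm, h3.2.2.symm⟩
      · rintro ⟨rfl, rfl, rfl, rfl⟩
        exact ⟨rfl, rfl, rfl, rfl⟩
    simp only [hcond]
    simp [ite_and, Finset.sum_ite_eq']
  · rw [if_neg h]
    refine Finset.sum_eq_zero fun i _ => Finset.sum_eq_zero fun j _ =>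
      Finset.sum_eq_zero fun k _ => Finset.sum_eq_zero fun l _ => ?_
    rw [if_neg]
    rintro ⟨h0, h1, h2, h3⟩
    refine h ⟨![i, j, k, l], funext fun m => ?_⟩
    fin_cases m
    · exact h0
    · exact h1
    · exact h2
    · exact h3

lemma toPoly_hc (F : Type) [Field F] (N : ℕ) :
    toPoly (hcTensor F N) = ∑ c : Fin 4 → Fin N, ∏ m : Fin 4,
      (X ⟨m, tripAt m c⟩ : MvPolynomial (Σ _ : Fin 4, Fin N × Fin N × Fin N) F) := by
  rw [toPoly]
  have key : ∀ a : Fin 4 → Fin N × Fin N × Fin N,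
      C (hcTensor F N a) * ∏ m, (X ⟨m, a m⟩ : MvPolynomial (Σ _ : Fin 4, Fin N × Fin N × Fin N) F)
      = if ∃ c : Fin 4 → Fin N, a = A c then ∏ m, X ⟨m, a m⟩ else 0 := by
    intro a
    rw [hcTensor_eq]
    split_ifs <;> simp
  simp only [key]
  rw [← Finset.sum_subset (Finset.subset_univ (Finset.univ.image (A (N := N))))
    (fun a _ ha => by
      rw [if_neg]
      rintro ⟨c, rfl⟩
      exact ha (Finset.mem_image.mpr ⟨c, Finset.mem_univ c, rfl⟩))]
  rw [Finset.sum_image (fun c _ c' _ h => A_injective h)]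
  refine Finset.sum_congr rfl fun c _ => ?_
  rw [if_pos ⟨c, rfl⟩]
  rfl

lemma toPoly_g (F : Type) [Field F] (N : ℕ) [NeZero N] :
    MvPolynomial.aeval
      (fun q => Sum.elim (fun c => (MvPolynomial.C c : MvPolynomial (Σ _ : Fin 4, Fin N × Fin N × Fin N) F))
        (fun p => MvPolynomial.X p) (theSub F N q)) (toPoly (gTensor F hcIncidence N))
    = ∑ c : Fin 4 → Fin N, ∏ m : Fin 4,
      (X ⟨m, tripAt m c⟩ : MvPolynomial (Σ _ : Fin 4, Fin N × Fin N × Fin N) F) := by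
  set φ := fun q => Sum.elim
    (fun c => (MvPolynomial.C c : MvPolynomial (Σ _ : Fin 4, Fin N × Fin N × Fin N) F))
    (fun p => MvPolynomial.X p) (theSub F N q) with hφ
  set T0 : (∀ v : Vtx, hcIncidence.Inc v → Fin N) → MvPolynomial (Σ _ : Fin 4, Fin N × Fin N × Fin N) F :=
    fun b => ∏ S : {S : Finset (Fin 4) // S.card = 3},
      X ⟨modeOf S, tripAt (modeOf S) (gAtL S (b (Sum.inl S)))⟩ with hT0
  rw [toPoly, map_sum]
  have step1 : ∀ b : ∀ v : Vtx, hcIncidence.Inc v → Fin N,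
      (aeval φ) (C (gTensor F hcIncidence N b) * ∏ v, X ⟨v, b v⟩)
        = if Good b then T0 b else 0 := by
    intro b
    rw [map_mul, aeval_C, MvPolynomial.algebraMap_eq, map_prod]
    simp only [aeval_X, hφ]
    rw [Fintype.prod_sum_type]
    simp only [theSub_inl, theSub_inr, Sum.elim_inl, Sum.elim_inr]
    rw [gTensor_eq, ← map_prod (C : F →+* MvPolynomial (Σ _ : Fin 4, Fin N × Fin N × Fin N) F)
      (fun v : Fin 4 => if ∃ cv : Fin N, ∀ e, b (Sum.inr v) e = cv then (1:F) else 0)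
      Finset.univ, Finset.prod_boole]
    simp only [apply_ite C, map_one, map_zero, ite_mul, mul_ite, one_mul, zero_mul,
      mul_one, mul_zero]
    by_cases h1 : Cons b
    · by_cases h2 : ∀ v : Fin 4, ∃ cv : Fin N, ∀ e, b (Sum.inr v) e = cv
      · simp [h1, h2, Good, hT0]
      · have h2' : ¬ ∀ v ∈ (Finset.univ : Finset (Fin 4)), ∃ cv : Fin N, ∀ e, b (Sum.inr v) e = cv :=
          fun hv => h2 fun v => hv v (Finset.mem_univ v)
        simp [h1, h2, h2', Good]
    · simp [h1, Good]
  simp only [step1]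
  rw [← Finset.sum_subset (Finset.subset_univ (Finset.univ.image (B (N := N))))
    (fun b _ hb => by
      rw [if_neg]
      intro hg
      obtain ⟨c, rfl⟩ := good_exists hg
      exact hb (Finset.mem_image.mpr ⟨c, Finset.mem_univ c, rfl⟩))]
  rw [Finset.sum_image (fun c _ c' _ h => B_injective h)]
  refine Finset.sum_congr rfl fun c _ => ?_
  rw [if_pos (good_B c)]
  simp only [hT0]
  refine Eq.trans (Finset.prod_congr rfl fun S _ => by rw [tripAt_gAtL_B]) ?_
  exact Fintype.prod_bijective modeOf modeOf_bijective _ _ fun S => rfl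

end HC34

/-- For every `N ≥ 1`, the `(3,4)`-hyperclique tensor is a simple
projection of the graph tensor of the incidence graph: `H^N_{3,4} ≤ₛ T_{I,N}`. -/
theorem hcTensor_simpleProj_incidence (F : Type) [Field F] (N : ℕ) (hN : 1 ≤ N) :
    SimpleProj (hcTensor F N) (gTensor F hcIncidence N) := by
  haveI : NeZero N := ⟨by omega⟩
  refine ⟨HC34.theSub F N, ?_, ?_⟩
  · rintro (S | v) y y' p p' h h'
    · rw [HC34.theSub_inl] at h h'
      obtain rfl := Sum.inr.inj h
      obtain rfl := Sum.inr.inj h'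
      rfl
    · rw [HC34.theSub_inr] at h
      exact absurd h (by simp)
  · rw [HC34.toPoly_hc]
    exact (HC34.toPoly_g F N).symm
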